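/- Any two k-ary trees with n internal vertices are connected by a sequence of flips, where a flip at a vertex v with internal child x = v^{(i)} replaces x's role by another child position while preserving, in left-to-right order, the list of subtrees T_v', ..., T_v^{(i-1)}, T_x', ..., T_x^{(k)}, T_v^{(i+1)}, ..., T_v^{(k)}. -/

import Mathlib

/-- A `k`-ary tree: every vertex has exactly `k` children or none. -/
inductive KTree (k : ℕ) : Type
  | leaf : KTree k
  | node : (Fin k → KTree k) → KTree k

namespace KTree

/-- Number of internal vertices of a `k`-ary tree. -/
def internals {k : ℕ} : KTree k → ℕ
  | leaf => 0
  | node f => 1 + ∑ i : Fin k, (f i).internals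

/-- Assemble a tree from a root `v` whose `i`-th child is internal: the
`2k-1` subtrees `s 0, s 1, …, s (2k-2)`, listed left to right in depth-first
order, hang off `v` and its `i`-th child `x`; namely the children of `v` are
`s 0, …, s (i-1)`, then `x`, then `s (i+k), …, s (2k-2)`, and the children of
`x` are `s i, …, s (i+k-1)`. -/
def assemble {k : ℕ} (i : Fin k) (s : ℕ → KTree k) : KTree k :=
  node (fun j =>
    if (j : ℕ) < (i : ℕ) then s j
    else if (j : ℕ) = (i : ℕ) then node (fun m => s ((i : ℕ) + (m : ℕ)))
    else s ((j : ℕ) + k - 1))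

/-- The flip relation: two trees are related by a flip if they agree everywhere
except at some vertex `v` with an internal child, where the position of the
internal child changes from `i` to `j` while the left-to-right list of the
`2k-1` subtrees hanging off `v` and that child is preserved. -/
inductive Flip {k : ℕ} : KTree k → KTree k → Prop
  | here (i j : Fin k) (s : ℕ → KTree k) : Flip (assemble i s) (assemble j s)
  | congr (f g : Fin k → KTree k) (i : Fin k) :
      Flip (f i) (g i) → (∀ j, j ≠ i → f j = g j) → Flip (node f) (node g)

end KTree

namespace KTree

open Relation

lemma flip_symm {k} {T T' : KTree k} (h : Flip T T') : Flip T' T := by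
  induction h with
  | here i j s => exact .here j i s
  | congr f g i h he ih => exact .congr g f i ih (fun j hj => (he j hj).symm)

lemma rtg_symm {k} {T T' : KTree k} (h : ReflTransGen Flip T T') :
    ReflTransGen Flip T' T := by
  induction h with
  | refl => exact .refl
  | tail _ st ih => exact ih.head (flip_symm st)

lemma rtg_node_update {k} (f : Fin k → KTree k) (i : Fin k) (t : KTree k)
    (h : ReflTransGen Flip (f i) t) :
    ReflTransGen Flip (node f) (node (Function.update f i t)) := by
  induction h with
  | refl => rw [Function.update_eq_self]
  | tail hb step ih =>
      refine ih.tail (.congr _ _ i ?_ ?_)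
      · simpa using step
      · intro j hj; simp [Function.update_of_ne hj]

lemma rtg_node {k} (f g : Fin k → KTree k) (h : ∀ j, ReflTransGen Flip (f j) (g j)) :
    ReflTransGen Flip (node f) (node g) := by
  suffices H : ∀ S : Finset (Fin k),
      ReflTransGen Flip (node f) (node (fun j => if j ∈ S then g j else f j)) by
    simpa using H Finset.univ
  intro S
  induction S using Finset.induction with
  | empty => exact .refl
  | @insert i S hi ih =>
      have : (fun j => if j ∈ insert i S then g j else f j) =
          Function.update (fun j => if j ∈ S then g j else f j) i (g i) := by
        funext j
        by_cases hj : j = i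
        · subst hj; simp
        · simp [Function.update_of_ne hj, Finset.mem_insert, hj]
      rw [this]
      exact ih.trans (rtg_node_update _ i _ (by simpa [hi] using h i))

/-- The left comb with `n` internal vertices. -/
def comb (k : ℕ) : ℕ → KTree (k+1)
  | 0 => leaf
  | n+1 => node (fun j => if (j : ℕ) = 0 then comb k n else leaf)

lemma comb_internals (k n : ℕ) : (comb k n).internals = n := by
  induction n with
  | zero => rfl
  | succ n ih =>
      have : ∀ j : Fin (k+1),
          ((if (j : ℕ) = 0 then comb k n else leaf).internals) =
          (if j = 0 then n else 0) := by
        intro j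
        by_cases hj : (j : ℕ) = 0
        · simp [hj, ih, internals, Fin.ext_iff]
        · simp [hj, internals, Fin.ext_iff]
      simp only [comb, internals]
      rw [Finset.sum_congr rfl (fun j _ => this j)]
      simp
      omega

/-- The list of subtrees used for the key flip. -/
def sfun (k i : ℕ) (n : ℕ → ℕ) : ℕ → KTree (k+1) := fun m =>
  if m < i then comb k (n m)
  else if m = i then comb k (n i - 1)
  else if m ≤ 2*k ∧ i + k < m then comb k (n (m - k))
  else leaf

lemma e1 (k i : ℕ) (n : ℕ → ℕ) (hi1 : 1 ≤ i) (hik : i < k+1) (hni : 1 ≤ n i) :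
    assemble ⟨i, hik⟩ (sfun k i n) = node (fun j : Fin (k+1) => comb k (n ↑j)) := by
  unfold assemble
  congr 1
  funext j
  rcases lt_trichotomy (j : ℕ) i with hj | hj | hj
  · simp [sfun, hj]
  · simp only [hj]
    simp only [lt_irrefl, if_false, if_pos rfl, if_true]
    have hn : n i = (n i - 1) + 1 := by omega
    rw [hn]
    show node _ = node _
    congr 1
    funext m
    simp only [sfun]
    by_cases hm : (m : ℕ) = 0
    · simp [hm]
    · have h1 : ¬ (i + (m:ℕ) < i) := by omega
      have h2 : ¬ (i + (m:ℕ) = i) := by omega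
      have h3 : ¬ (i + k < i + (m:ℕ)) := by
        have := m.isLt; omega
      simp [h1, h2, h3, hm]
  · have h0 : ¬ ((j:ℕ) < i) := by omega
    have h0' : ¬ ((j:ℕ) = i) := by omega
    simp only [h0, h0', if_false]
    have hjk := j.isLt
    have e : (j:ℕ) + (k+1) - 1 = (j:ℕ) + k := by omega
    rw [e]
    simp only [sfun]
    have h1 : ¬ ((j:ℕ) + k < i) := by omega
    have h2 : ¬ ((j:ℕ) + k = i) := by omega
    have h3 : (j:ℕ) + k ≤ 2*k ∧ i + k < (j:ℕ) + k := by omega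
    simp only [h1, h2, h3, if_false, if_true, if_pos]
    have e2 : (j:ℕ) + k - k = (j:ℕ) := by omega
    rw [e2]
    simp

lemma e2 (k i : ℕ) (n : ℕ → ℕ) (hi1 : 1 ≤ i) (hik : i < k+1) (hni : 1 ≤ n i) :
    assemble (0 : Fin (k+1)) (sfun k i n) =
      node (fun j : Fin (k+1) =>
        if (j : ℕ) = 0 then
          node (fun m : Fin (k+1) =>
            comb k (if (m:ℕ) < i then n ↑m else if (m:ℕ) = i then n i - 1 else 0))
        else comb k (if i < (j:ℕ) then n ↑j else 0)) := by
  unfold assemble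
  congr 1
  funext j
  by_cases hj : (j : ℕ) = 0
  · simp only [hj, Fin.val_zero, lt_irrefl, if_false, if_pos rfl, if_true]
    congr 1
    funext m
    simp only [sfun, Nat.zero_add]
    have hmk := m.isLt
    rcases lt_trichotomy (m : ℕ) i with hm | hm | hm
    · simp [hm]
    · simp [hm]
    · have h1 : ¬ ((m:ℕ) < i) := by omega
      have h2 : ¬ ((m:ℕ) = i) := by omega
      have h3 : ¬ ((m:ℕ) ≤ 2*k ∧ i + k < (m:ℕ)) := by omega
      simp [h1, h2, h3, comb]
  · have hjk := j.isLt
    have h0 : ¬ ((j:ℕ) < (0:ℕ)) := by omega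
    simp only [Fin.val_zero, h0, hj, if_false]
    have e : (j:ℕ) + (k+1) - 1 = (j:ℕ) + k := by omega
    rw [e]
    simp only [sfun]
    have h1 : ¬ ((j:ℕ) + k < i) := by omega
    have h2 : ¬ ((j:ℕ) + k = i) := by omega
    simp only [h1, h2, if_false]
    by_cases h4 : i < (j:ℕ)
    · have h3 : (j:ℕ) + k ≤ 2*k ∧ i + k < (j:ℕ) + k := by omega
      simp only [h3, if_true, h4, if_pos]
      have e3 : (j:ℕ) + k - k = (j:ℕ) := by omega
      rw [e3]
      simp
    · have h3 : ¬ ((j:ℕ) + k ≤ 2*k ∧ i + k < (j:ℕ) + k) := by omega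
      simp [h3, h4, comb]

lemma node_combs (k N : ℕ)
    (IH : ∀ M, M < N → ∀ T : KTree (k+1), T.internals = M →
      ReflTransGen Flip T (comb k M)) :
    ∀ μ (n : ℕ → ℕ), (∑ j ∈ Finset.range (k+1), n j) + 1 = N →
      (∑ j ∈ Finset.range (k+1), if j = 0 then 0 else n j) ≤ μ →
      ReflTransGen Flip (node (fun j : Fin (k+1) => comb k (n ↑j))) (comb k N) := by
  intro μ
  induction μ with
  | zero =>
      intro n hN hμ
      have hz : ∀ j, 1 ≤ j → j < k+1 → n j = 0 := by
        intro j h1 h2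
        have hle := Finset.single_le_sum
          (f := fun j => if j = 0 then 0 else n j)
          (fun _ _ => Nat.zero_le _) (Finset.mem_range.mpr h2)
        have : ¬ (j = 0) := by omega
        simp only [this, if_false] at hle
        omega
      have hsum : ∑ j ∈ Finset.range (k+1), n j = n 0 := by
        rw [Finset.sum_eq_single_of_mem 0 (Finset.mem_range.mpr (by omega))]
        intro j hj hj0
        exact hz j (by omega) (Finset.mem_range.mp hj)
      have hN0 : N = n 0 + 1 := by omega
      rw [hN0]
      have he : (node fun j : Fin (k+1) => comb k (n ↑j)) = comb k (n 0 + 1) := by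
        show _ = node _
        congr 1
        funext j
        by_cases hj : (j:ℕ) = 0
        · simp [hj]
        · have : n ↑j = 0 := hz _ (by omega) j.isLt
          simp [hj, this, comb]
      rw [he]
  | succ μ ihμ =>
      intro n hN hμ
      by_cases h0 : (∑ j ∈ Finset.range (k+1), if j = 0 then 0 else n j) = 0
      · exact ihμ n hN (by omega)
      · obtain ⟨i, hirange, hival⟩ :
            ∃ i ∈ Finset.range (k+1), (if i = 0 then 0 else n i) ≠ 0 := by
          by_contra hc
          push_neg at hc
          exact h0 (Finset.sum_eq_zero hc)
        have hik : i < k+1 := Finset.mem_range.mp hirange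
        have hi1 : 1 ≤ i := by by_contra hc; simp [show i = 0 by omega] at hival
        have hni : 1 ≤ n i := by
          have : ¬ (i = 0) := by omega
          simp only [this, if_false] at hival
          omega
        -- the single flip at the root
        have step1 : Flip (node fun j : Fin (k+1) => comb k (n ↑j))
            (node (fun j : Fin (k+1) =>
              if (j : ℕ) = 0 then
                node (fun m : Fin (k+1) =>
                  comb k (if (m:ℕ) < i then n ↑m else if (m:ℕ) = i then n i - 1 else 0))
              else comb k (if i < (j:ℕ) then n ↑j else 0))) := by
          rw [← e1 k i n hi1 hik hni, ← e2 k i n hi1 hik hni]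
          exact Flip.here _ _ _
        -- sums
        set SA := ∑ j ∈ Finset.range (k+1),
          (if j < i then n j else if j = i then n i - 1 else 0) with hSA
        set Sm := ∑ j ∈ Finset.range (k+1), (if i < j then n j else 0) with hSm
        have I1 : ∑ j ∈ Finset.range (k+1), n j = SA + 1 + Sm := by
          have hpt : ∀ j ∈ Finset.range (k+1), n j =
              ((if j < i then n j else if j = i then n i - 1 else 0) +
               (if j = i then 1 else 0)) + (if i < j then n j else 0) := by
            intro j _
            rcases eq_or_ne j i with rfl | hne
            · simp; omega
            · split_ifs <;> omega
          rw [Finset.sum_congr rfl hpt, Finset.sum_add_distrib, Finset.sum_add_distrib]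
          have : ∑ j ∈ Finset.range (k+1), (if j = i then 1 else 0) = 1 := by
            simp [Finset.sum_ite_eq', hik]
          omega
        have I2 : Sm < ∑ j ∈ Finset.range (k+1), (if j = 0 then 0 else n j) := by
          apply Finset.sum_lt_sum
          · intro j _; split_ifs <;> omega
          · exact ⟨i, hirange, by split_ifs <;> omega⟩
        -- the internals of the new child 0
        have hA : (node (fun m : Fin (k+1) =>
            comb k (if (m:ℕ) < i then n ↑m else if (m:ℕ) = i then n i - 1 else 0))).internals
            = 1 + SA := by
          simp only [internals, comb_internals, hSA]
          rw [Fin.sum_univ_eq_sum_range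
            (fun x => if x < i then n x else if x = i then n i - 1 else 0) (k+1)]
        have hAlt : 1 + SA < N := by omega
        -- reduce the new child 0 to a comb
        have step2 : ReflTransGen Flip
            (node (fun j : Fin (k+1) =>
              if (j : ℕ) = 0 then
                node (fun m : Fin (k+1) =>
                  comb k (if (m:ℕ) < i then n ↑m else if (m:ℕ) = i then n i - 1 else 0))
              else comb k (if i < (j:ℕ) then n ↑j else 0)))
            (node (fun j : Fin (k+1) =>
              comb k (if (j:ℕ) = 0 then 1 + SA else if i < (j:ℕ) then n ↑j else 0))) := by
          apply rtg_node
          intro j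
          by_cases hj : (j:ℕ) = 0
          · simp only [hj, if_pos rfl, if_true]
            exact IH _ hAlt _ hA
          · simp only [hj, if_false]
            exact .refl
        -- conclude by the inner induction hypothesis
        have step3 : ReflTransGen Flip
            (node (fun j : Fin (k+1) =>
              comb k (if (j:ℕ) = 0 then 1 + SA else if i < (j:ℕ) then n ↑j else 0)))
            (comb k N) := by
          apply ihμ (fun x => if x = 0 then 1 + SA else if i < x then n x else 0)
          · have hpt : ∀ j ∈ Finset.range (k+1),
                (if j = 0 then 1 + SA else if i < j then n j else 0) =
                (if j = 0 then 1 + SA else 0) + (if i < j then n j else 0) := by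
              intro j _; split_ifs <;> omega
            rw [Finset.sum_congr rfl hpt, Finset.sum_add_distrib]
            have : ∑ j ∈ Finset.range (k+1), (if j = 0 then 1 + SA else 0) = 1 + SA := by
              simp [Finset.sum_ite_eq, Finset.mem_range]
            omega
          · have hpt : ∀ j ∈ Finset.range (k+1),
                (if j = 0 then 0 else if j = 0 then 1 + SA else if i < j then n j else 0) =
                (if i < j then n j else 0) := by
              intro j _; split_ifs <;> omega
            rw [Finset.sum_congr rfl hpt]
            omega
        exact (ReflTransGen.single step1).trans (step2.trans step3)

lemma to_comb (k : ℕ) (N : ℕ) (T : KTree (k+1)) (hT : T.internals = N) :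
    Relation.ReflTransGen Flip T (comb k N) := by
  induction N using Nat.strong_induction_on generalizing T with
  | _ N IH =>
  cases T with
  | leaf =>
      have : N = 0 := by simpa [internals] using hT.symm
      subst this
      exact .refl
  | node f =>
      have hN : N = 1 + ∑ j : Fin (k+1), (f j).internals := by
        simpa [internals] using hT.symm
      have h1 : ReflTransGen Flip (node f)
          (node fun j : Fin (k+1) =>
            comb k (if h : (j:ℕ) < k+1 then (f ⟨↑j, h⟩).internals else 0)) := by
        apply rtg_node
        intro j
        have he : (if h : (j:ℕ) < k+1 then (f ⟨↑j, h⟩).internals else 0)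
            = (f j).internals := by simp [j.isLt]
        rw [he]
        apply IH _ _ _ rfl
        have hle : (f j).internals ≤ ∑ j : Fin (k+1), (f j).internals :=
          Finset.single_le_sum (f := fun j => (f j).internals)
            (fun _ _ => Nat.zero_le _) (Finset.mem_univ j)
        omega
      refine h1.trans (node_combs k N IH _
        (fun x => if h : x < k+1 then (f ⟨x, h⟩).internals else 0) ?_ le_rfl)
      rw [← Fin.sum_univ_eq_sum_range
        (fun x => if h : x < k+1 then (f ⟨x, h⟩).internals else 0) (k+1)]
      have he : ∀ j : Fin (k+1),
          (if h : (j:ℕ) < k+1 then (f ⟨↑j, h⟩).internals else 0) = (f j).internals := by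
        intro j; simp [j.isLt]
      rw [Finset.sum_congr rfl (fun j _ => he j)]
      omega

end KTree

theorem stmt16 (k : ℕ) (T T' : KTree k) (h : T.internals = T'.internals) :
    Relation.ReflTransGen KTree.Flip T T' := by
  cases k with
  | zero =>
      cases T with
      | leaf =>
          cases T' with
          | leaf => exact .refl
          | node g => simp [KTree.internals] at h
      | node f =>
          cases T' with
          | leaf => simp [KTree.internals] at h
          | node g =>
              have : f = g := funext fun j => j.elim0
              rw [this]
  | succ k =>
      exact (KTree.to_comb k T.internals T rfl).trans
        (KTree.rtg_symm (KTree.to_comb k T.internals T' h.symm))
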